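/- Fix n ∈ ℕ, integers a₀, …, aₙ, and s ∈ ℂ with s ≠ i for every i ∈ {0, …, n}. Then, as the real variable q tends to 1 from the right (q → 1⁺ with q > 1), the product ∏_{i=0}^{n} ((1 − q^{i−s})/(q − 1))^{a_i} tends to ∏_{i=0}^{n} (s − i)^{a_i}. (This identifies the limit q → 1 of (q−1)^{N(1)} · ζ(X_{F_q}, s) for a scheme with counting polynomial N(q) = Σ a_i q^i, giving Soulé's zeta function ζ_X(s) = ∏ (s−i)^{a_i} over F₁.) -/

import Mathlib

open Filter Finset

lemma aux_tendsto (w : ℂ) :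
    Tendsto (fun q : ℝ => (1 - (q : ℂ) ^ w) / ((q : ℂ) - 1))
      (nhdsWithin 1 (Set.Ioi 1)) (nhds (-w)) := by
  have hd : HasDerivAt (fun q : ℝ => (q : ℂ) ^ w) w 1 := by
    have : HasDerivAt (fun z : ℂ => z ^ w) (w * (1 : ℂ) ^ (w - 1) * 1) (1 : ℝ) := by
      exact (hasDerivAt_id (1 : ℂ)).cpow_const (by simp [Complex.slitPlane])
    simpa using this.comp_ofReal
  have hslope := hasDerivAt_iff_tendsto_slope.mp hd
  have hsub : Tendsto (fun q : ℝ => slope (fun q : ℝ => (q : ℂ) ^ w) 1 q)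
      (nhdsWithin 1 (Set.Ioi 1)) (nhds w) :=
    hslope.mono_left (nhdsWithin_mono _ (fun x hx => ne_of_gt hx))
  have := hsub.neg
  rw [show -w = -w from rfl] at this
  refine this.congr' ?_
  filter_upwards [self_mem_nhdsWithin] with q hq
  have hq1 : (q : ℝ) ≠ 1 := ne_of_gt hq
  have hq1' : (q : ℂ) - 1 ≠ 0 := by
    simpa [sub_eq_zero] using fun h => hq1 (by exact_mod_cast h)
  simp only [slope, vsub_eq_sub, Complex.one_cpow, Complex.real_smul]
  push_cast
  field_simp
  rw [Complex.one_cpow, neg_sub]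

theorem soule_zeta_limit (n : ℕ) (a : ℕ → ℤ) (s : ℂ)
    (hs : ∀ i ∈ Finset.range (n + 1), s ≠ (i : ℂ)) :
    Tendsto
      (fun q : ℝ =>
        ∏ i ∈ Finset.range (n + 1),
          ((1 - (q : ℂ) ^ ((i : ℂ) - s)) / ((q : ℂ) - 1)) ^ a i)
      (nhdsWithin 1 (Set.Ioi 1))
      (nhds (∏ i ∈ Finset.range (n + 1), (s - (i : ℂ)) ^ a i)) := by
  refine tendsto_finset_prod _ fun i hi => ?_
  have h1 : Tendsto (fun q : ℝ => (1 - (q : ℂ) ^ ((i : ℂ) - s)) / ((q : ℂ) - 1))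
      (nhdsWithin 1 (Set.Ioi 1)) (nhds (s - (i : ℂ))) := by
    simpa [neg_sub] using aux_tendsto ((i : ℂ) - s)
  exact h1.zpow₀ (a i) (Or.inl (sub_ne_zero.mpr (hs i hi)))
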